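/- (Lemma 3.3, reduced form.) Let c ∈ (0,√2), p ∈ (0,1) with p < p₀, and let k ∈ ℕ, k ≥ 1, be such that κ₂/κ₁ < k. Then the set { θ ∈ ℝ : θ < θ₂ and L(c,p,θ) = m for some positive integer m } is finite and has at most ⌈(k+1)/2⌉ − 1 elements. (Hence there are at most ⌈(k+1)/2⌉ − 1 even one-troughed travelling wave solutions.) -/

import Mathlib

open Real Filter Set

set_option maxHeartbeats 1000000

/-- `ξ = p c⁴ / 4`. -/
noncomputable def xiPar (c p : ℝ) : ℝ := p * c ^ 4 / 4

/-- `κ₁ = √((c² − √(c⁴ − 4ξ))/2)`. -/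
noncomputable def kappa1 (c p : ℝ) : ℝ :=
  Real.sqrt ((c ^ 2 - Real.sqrt (c ^ 4 - 4 * xiPar c p)) / 2)

/-- `κ₂ = √((c² + √(c⁴ − 4ξ))/2)`. -/
noncomputable def kappa2 (c p : ℝ) : ℝ :=
  Real.sqrt ((c ^ 2 + Real.sqrt (c ^ 4 - 4 * xiPar c p)) / 2)

/-- The function `L(c,p,θ)` from the paper. -/
noncomputable def Lfun (c p θ : ℝ) : ℝ :=
  (1 / 2) * (1 + kappa2 c p / kappa1 c p)
  + (1 / Real.pi) * Real.arctan
      ((kappa2 c p * (-(kappa1 c p) ^ 2 + xiPar c p + xiPar c p * θ * Real.sqrt (2 - c ^ 2))) /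
       (xiPar c p * (θ * (kappa1 c p) ^ 2 + Real.sqrt (2 - c ^ 2) + θ * (1 - c ^ 2))))
  - (kappa2 c p / (kappa1 c p * Real.pi)) * Real.arctan
      ((kappa1 c p * (-(kappa2 c p) ^ 2 + xiPar c p + xiPar c p * θ * Real.sqrt (2 - c ^ 2))) /
       (xiPar c p * (θ * (kappa2 c p) ^ 2 + Real.sqrt (2 - c ^ 2) + θ * (1 - c ^ 2))))

/-- The discontinuity point `θ₁ = −2√(2−c²)/(2−c² − c²√(1−p))`. -/
noncomputable def theta1 (c p : ℝ) : ℝ :=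
  -2 * Real.sqrt (2 - c ^ 2) / (2 - c ^ 2 - c ^ 2 * Real.sqrt (1 - p))

/-- The discontinuity point `θ₂ = −2√(2−c²)/(2−c² + c²√(1−p))`. -/
noncomputable def theta2 (c p : ℝ) : ℝ :=
  -2 * Real.sqrt (2 - c ^ 2) / (2 - c ^ 2 + c ^ 2 * Real.sqrt (1 - p))

/-- The threshold `p₀ = 4(c²−1)/c⁴`. -/
noncomputable def p0 (c : ℝ) : ℝ := 4 * (c ^ 2 - 1) / c ^ 4

/-- An abstract version of `Lfun` in terms of `κ₁, κ₂, s = √(2−c²)`. -/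
noncomputable def auxF (k1 k2 s θ : ℝ) : ℝ :=
  (1 / 2) * (1 + k2 / k1)
  + (1 / Real.pi) * Real.arctan
      ((k2 * (-k1 ^ 2 + k1 ^ 2 * k2 ^ 2 + k1 ^ 2 * k2 ^ 2 * θ * s)) /
       (k1 ^ 2 * k2 ^ 2 * (θ * k1 ^ 2 + s + θ * (1 - (k1 ^ 2 + k2 ^ 2)))))
  - (k2 / (k1 * Real.pi)) * Real.arctan
      ((k1 * (-k2 ^ 2 + k1 ^ 2 * k2 ^ 2 + k1 ^ 2 * k2 ^ 2 * θ * s)) /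
       (k1 ^ 2 * k2 ^ 2 * (θ * k2 ^ 2 + s + θ * (1 - (k1 ^ 2 + k2 ^ 2)))))

lemma sign_helper (k1 k2 P1 P2 : ℝ) (hk1 : 0 < k1) (hk2 : 0 < k2) (hP1 : 0 < P1)
    (hP2 : 0 < P2) (hx : 0 < 1 - k1 ^ 2 * k2 ^ 2) (hI : 0 < k2 ^ 2 * P1 - k1 ^ 2 * P2) :
    1 / Real.pi * (k1 ^ 2 * k2 * (k1 ^ 2 * k2 ^ 2) * (1 - k1 ^ 2 * k2 ^ 2) / P1)
      - k2 / (k1 * Real.pi) * (k1 * k2 ^ 2 * (k1 ^ 2 * k2 ^ 2) * (1 - k1 ^ 2 * k2 ^ 2) / P2)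
      < 0 := by
  have hπ : (0 : ℝ) < Real.pi := Real.pi_pos
  have heq : 1 / Real.pi * (k1 ^ 2 * k2 * (k1 ^ 2 * k2 ^ 2) * (1 - k1 ^ 2 * k2 ^ 2) / P1)
      - k2 / (k1 * Real.pi) * (k1 * k2 ^ 2 * (k1 ^ 2 * k2 ^ 2) * (1 - k1 ^ 2 * k2 ^ 2) / P2) =
      (-(k1 * k2 * (k1 ^ 2 * k2 ^ 2) * (1 - k1 ^ 2 * k2 ^ 2) * (k2 ^ 2 * P1 - k1 ^ 2 * P2))) /
        (k1 * Real.pi * P1 * P2) := by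
    field_simp
    ring
  rw [heq]
  apply div_neg_of_neg_of_pos
  · have h1 : 0 < k1 * k2 * (k1 ^ 2 * k2 ^ 2) * (1 - k1 ^ 2 * k2 ^ 2) :=
      mul_pos (by positivity) hx
    have := mul_pos h1 hI
    linarith
  · exact mul_pos (mul_pos (mul_pos hk1 hπ) hP1) hP2

lemma helper_div (n d W : ℝ) (hd : d ≠ 0) :
    1 / (1 + (n / d) ^ 2) * (W / d ^ 2) = W / (d ^ 2 + n ^ 2) := by
  have h1 : d ^ 2 + n ^ 2 ≠ 0 := by positivity
  field_simp

section aux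

variable {k1 k2 s : ℝ} (hk1 : 0 < k1) (hk12 : k1 < k2) (ha1 : k1 ^ 2 < 1)
  (hb1 : 1 < k2 ^ 2) (hξ1 : k1 ^ 2 * k2 ^ 2 < 1) (hs0 : 0 < s)
  (hs2 : s ^ 2 = 2 - (k1 ^ 2 + k2 ^ 2))

include hk1 hk12 ha1 hb1 hξ1 hs0 hs2

lemma auxF_deriv {θ : ℝ} (hθ : θ < -s / (1 - k1 ^ 2)) :
    ∃ D, HasDerivAt (auxF k1 k2 s) D θ ∧ D < 0 := by
  have hk2 : 0 < k2 := hk1.trans hk12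
  have hξ0 : 0 < k1 ^ 2 * k2 ^ 2 := by positivity
  have ha1' : 0 < 1 - k1 ^ 2 := by linarith
  have hθ0 : θ < 0 := by
    have h2 : -s / (1 - k1 ^ 2) < 0 := div_neg_of_neg_of_pos (by linarith) ha1'
    linarith
  have hθmul : θ * (1 - k1 ^ 2) < -s := (lt_div_iff₀ ha1').mp hθ
  have hd1in : 0 < θ * k1 ^ 2 + s + θ * (1 - (k1 ^ 2 + k2 ^ 2)) := by nlinarith
  have hd2in : θ * k2 ^ 2 + s + θ * (1 - (k1 ^ 2 + k2 ^ 2)) < 0 := by nlinarith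
  have hne1 : k1 ^ 2 * k2 ^ 2 * (θ * k1 ^ 2 + s + θ * (1 - (k1 ^ 2 + k2 ^ 2))) ≠ 0 :=
    (mul_pos hξ0 hd1in).ne'
  have hne2 : k1 ^ 2 * k2 ^ 2 * (θ * k2 ^ 2 + s + θ * (1 - (k1 ^ 2 + k2 ^ 2))) ≠ 0 :=
    (mul_neg_of_pos_of_neg hξ0 hd2in).ne
  -- numerators and denominators
  set n1 : ℝ := k2 * (-k1 ^ 2 + k1 ^ 2 * k2 ^ 2 + k1 ^ 2 * k2 ^ 2 * θ * s) with hn1def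
  set d1 : ℝ := k1 ^ 2 * k2 ^ 2 * (θ * k1 ^ 2 + s + θ * (1 - (k1 ^ 2 + k2 ^ 2))) with hd1def
  set n2 : ℝ := k1 * (-k2 ^ 2 + k1 ^ 2 * k2 ^ 2 + k1 ^ 2 * k2 ^ 2 * θ * s) with hn2def
  set d2 : ℝ := k1 ^ 2 * k2 ^ 2 * (θ * k2 ^ 2 + s + θ * (1 - (k1 ^ 2 + k2 ^ 2))) with hd2def
  have hP1 : 0 < d1 ^ 2 + n1 ^ 2 :=
    add_pos_of_pos_of_nonneg (pow_pos (mul_pos hξ0 hd1in) 2) (sq_nonneg _)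
  have hP2 : 0 < d2 ^ 2 + n2 ^ 2 := by
    have : d2 ≠ 0 := hne2
    have : 0 < d2 ^ 2 := by positivity
    exact add_pos_of_pos_of_nonneg this (sq_nonneg _)
  -- HasDerivAt for the pieces
  have hN1 : HasDerivAt (fun θ : ℝ => k2 * (-k1 ^ 2 + k1 ^ 2 * k2 ^ 2 + k1 ^ 2 * k2 ^ 2 * θ * s))
      (k2 * (k1 ^ 2 * k2 ^ 2 * 1 * s)) θ :=
    ((((hasDerivAt_id' (x := θ)).const_mul (k1 ^ 2 * k2 ^ 2)).mul_const s).const_add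
      (-k1 ^ 2 + k1 ^ 2 * k2 ^ 2)).const_mul k2
  have hD1 : HasDerivAt (fun θ : ℝ =>
        k1 ^ 2 * k2 ^ 2 * (θ * k1 ^ 2 + s + θ * (1 - (k1 ^ 2 + k2 ^ 2))))
      (k1 ^ 2 * k2 ^ 2 * (1 * k1 ^ 2 + 1 * (1 - (k1 ^ 2 + k2 ^ 2)))) θ :=
    ((((hasDerivAt_id' (x := θ)).mul_const (k1 ^ 2)).add_const s).add
      ((hasDerivAt_id' (x := θ)).mul_const (1 - (k1 ^ 2 + k2 ^ 2)))).const_mul (k1 ^ 2 * k2 ^ 2)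
  have hN2 : HasDerivAt (fun θ : ℝ => k1 * (-k2 ^ 2 + k1 ^ 2 * k2 ^ 2 + k1 ^ 2 * k2 ^ 2 * θ * s))
      (k1 * (k1 ^ 2 * k2 ^ 2 * 1 * s)) θ :=
    ((((hasDerivAt_id' (x := θ)).const_mul (k1 ^ 2 * k2 ^ 2)).mul_const s).const_add
      (-k2 ^ 2 + k1 ^ 2 * k2 ^ 2)).const_mul k1
  have hD2 : HasDerivAt (fun θ : ℝ =>
        k1 ^ 2 * k2 ^ 2 * (θ * k2 ^ 2 + s + θ * (1 - (k1 ^ 2 + k2 ^ 2))))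
      (k1 ^ 2 * k2 ^ 2 * (1 * k2 ^ 2 + 1 * (1 - (k1 ^ 2 + k2 ^ 2)))) θ :=
    ((((hasDerivAt_id' (x := θ)).mul_const (k2 ^ 2)).add_const s).add
      ((hasDerivAt_id' (x := θ)).mul_const (1 - (k1 ^ 2 + k2 ^ 2)))).const_mul (k1 ^ 2 * k2 ^ 2)
  have harc1 : HasDerivAt (fun θ : ℝ => Real.arctan
      ((k2 * (-k1 ^ 2 + k1 ^ 2 * k2 ^ 2 + k1 ^ 2 * k2 ^ 2 * θ * s)) /
       (k1 ^ 2 * k2 ^ 2 * (θ * k1 ^ 2 + s + θ * (1 - (k1 ^ 2 + k2 ^ 2))))))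
      (k1 ^ 2 * k2 * (k1 ^ 2 * k2 ^ 2) * (1 - k1 ^ 2 * k2 ^ 2) / (d1 ^ 2 + n1 ^ 2)) θ := by
    have h := (hN1.div hD1 hne1).arctan
    convert h using 1
    · rfl
    simp only [Pi.div_apply]
    rw [helper_div _ _ _ hne1]
    congr 1
    linear_combination (-(k1 ^ 4 * k2 ^ 5)) * hs2
  have harc2 : HasDerivAt (fun θ : ℝ => Real.arctan
      ((k1 * (-k2 ^ 2 + k1 ^ 2 * k2 ^ 2 + k1 ^ 2 * k2 ^ 2 * θ * s)) /
       (k1 ^ 2 * k2 ^ 2 * (θ * k2 ^ 2 + s + θ * (1 - (k1 ^ 2 + k2 ^ 2))))))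
      (k1 * k2 ^ 2 * (k1 ^ 2 * k2 ^ 2) * (1 - k1 ^ 2 * k2 ^ 2) / (d2 ^ 2 + n2 ^ 2)) θ := by
    have h := (hN2.div hD2 hne2).arctan
    convert h using 1
    · rfl
    simp only [Pi.div_apply]
    rw [helper_div _ _ _ hne2]
    congr 1
    linear_combination (-(k1 ^ 5 * k2 ^ 4)) * hs2
  have hfull : HasDerivAt (auxF k1 k2 s)
      (1 / Real.pi * (k1 ^ 2 * k2 * (k1 ^ 2 * k2 ^ 2) * (1 - k1 ^ 2 * k2 ^ 2) / (d1 ^ 2 + n1 ^ 2))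
        - k2 / (k1 * Real.pi) *
          (k1 * k2 ^ 2 * (k1 ^ 2 * k2 ^ 2) * (1 - k1 ^ 2 * k2 ^ 2) / (d2 ^ 2 + n2 ^ 2))) θ :=
    ((harc1.const_mul (1 / Real.pi)).const_add ((1 / 2) * (1 + k2 / k1))).sub
      (harc2.const_mul (k2 / (k1 * Real.pi)))
  refine ⟨_, hfull, ?_⟩
  -- show the derivative is negative
  have hI4 : k2 ^ 2 * (d1 ^ 2 + n1 ^ 2) - k1 ^ 2 * (d2 ^ 2 + n2 ^ 2) =
      (k1 ^ 2 * k2 ^ 2) ^ 2 * (k2 ^ 2 - k1 ^ 2) * (1 - k1 ^ 2 * k2 ^ 2) * θ ^ 2 := by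
    rw [hn1def, hd1def, hn2def, hd2def]
    linear_combination (k1 ^ 4 * k2 ^ 6 + k1 ^ 4 * k2 ^ 8 * θ ^ 2 - k1 ^ 6 * k2 ^ 4
      - k1 ^ 8 * k2 ^ 4 * θ ^ 2) * hs2
  have hθsq : 0 < θ ^ 2 := by nlinarith
  have hfac : 0 < (k1 ^ 2 * k2 ^ 2) ^ 2 * (k2 ^ 2 - k1 ^ 2) * (1 - k1 ^ 2 * k2 ^ 2) * θ ^ 2 := by
    have h1 : 0 < k2 ^ 2 - k1 ^ 2 := by nlinarith
    have h2 : 0 < 1 - k1 ^ 2 * k2 ^ 2 := by linarith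
    have h3 : 0 < (k1 ^ 2 * k2 ^ 2) ^ 2 := by positivity
    exact mul_pos (mul_pos (mul_pos h3 h1) h2) hθsq
  exact sign_helper k1 k2 _ _ hk1 hk2 hP1 hP2 (by linarith) (by rw [hI4]; exact hfac)

lemma auxF_anti : StrictAntiOn (auxF k1 k2 s) (Set.Iio (-s / (1 - k1 ^ 2))) := by
  apply strictAntiOn_of_deriv_neg (convex_Iio _)
  · intro x hx
    obtain ⟨D, hD, _⟩ := auxF_deriv hk1 hk12 ha1 hb1 hξ1 hs0 hs2 hx
    exact hD.continuousAt.continuousWithinAt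
  · intro x hx
    rw [interior_Iio] at hx
    obtain ⟨D, hD, hneg⟩ := auxF_deriv hk1 hk12 ha1 hb1 hξ1 hs0 hs2 hx
    rw [hD.deriv]
    exact hneg

lemma auxF_le {θ : ℝ} (hθ : θ < -s / (1 - k1 ^ 2)) :
    auxF k1 k2 s θ ≤ (1 + k2 / k1) / 2 := by
  have hk2 : 0 < k2 := hk1.trans hk12
  have hξ0 : 0 < k1 ^ 2 * k2 ^ 2 := by positivity
  have ha1' : 0 < 1 - k1 ^ 2 := by linarith
  have hθ0 : θ < 0 := by
    have h2 : -s / (1 - k1 ^ 2) < 0 := div_neg_of_neg_of_pos (by linarith) ha1'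
    linarith
  have hθmul : θ * (1 - k1 ^ 2) < -s := (lt_div_iff₀ ha1').mp hθ
  have hd1in : 0 < θ * k1 ^ 2 + s + θ * (1 - (k1 ^ 2 + k2 ^ 2)) := by nlinarith
  have hd2in : θ * k2 ^ 2 + s + θ * (1 - (k1 ^ 2 + k2 ^ 2)) < 0 := by nlinarith
  set n1 : ℝ := k2 * (-k1 ^ 2 + k1 ^ 2 * k2 ^ 2 + k1 ^ 2 * k2 ^ 2 * θ * s) with hn1def
  set d1 : ℝ := k1 ^ 2 * k2 ^ 2 * (θ * k1 ^ 2 + s + θ * (1 - (k1 ^ 2 + k2 ^ 2))) with hd1def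
  set n2 : ℝ := k1 * (-k2 ^ 2 + k1 ^ 2 * k2 ^ 2 + k1 ^ 2 * k2 ^ 2 * θ * s) with hn2def
  set d2 : ℝ := k1 ^ 2 * k2 ^ 2 * (θ * k2 ^ 2 + s + θ * (1 - (k1 ^ 2 + k2 ^ 2))) with hd2def
  have hd1 : 0 < d1 := mul_pos hξ0 hd1in
  have hd2 : d2 < 0 := mul_neg_of_pos_of_neg hξ0 hd2in
  have hn2 : n2 < 0 := by
    have h1 : -k2 ^ 2 + k1 ^ 2 * k2 ^ 2 < 0 := by nlinarith
    have h2 : k1 ^ 2 * k2 ^ 2 * θ * s < 0 := by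
      have := mul_pos hξ0 hs0
      nlinarith
    rw [hn2def]
    exact mul_neg_of_pos_of_neg hk1 (by linarith)
  -- A2 ≥ 0
  have hA2 : 0 ≤ n2 / d2 := by
    rw [← neg_div_neg_eq]
    exact div_nonneg (by linarith) (by linarith)
  -- G ≥ 0 for θ < θ₂
  set θ₂ : ℝ := -s / (1 - k1 ^ 2) with hθ₂def
  set GA : ℝ := k1 * k2 * s * (1 + k1 * k2) with hGA
  set GB : ℝ := (1 - k1 ^ 2) * (1 - k2 ^ 2) + k1 * k2 * s ^ 2 with hGB
  set GC : ℝ := s * (1 + k1 * k2) with hGC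
  have hGA0 : 0 ≤ GA := by rw [hGA]; positivity
  have hθ₂val : θ₂ * (1 - k1 ^ 2) = -s := by
    rw [hθ₂def]
    field_simp
  have hGt2 : 0 ≤ GA * θ₂ ^ 2 + GB * θ₂ + GC := by
    have hmul : (GA * θ₂ ^ 2 + GB * θ₂ + GC) * (1 - k1 ^ 2) ^ 2 =
        s * (k1 * k2 * s ^ 2 * (k1 * k2 + k1 ^ 2) + (1 - k1 ^ 2) ^ 2 * (k1 * k2 + k2 ^ 2)) := by
      rw [hGA, hGB, hGC]
      have h1 : θ₂ = -s / (1 - k1 ^ 2) := hθ₂def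
      rw [h1]
      field_simp
      ring
    have hr : 0 ≤ s * (k1 * k2 * s ^ 2 * (k1 * k2 + k1 ^ 2) + (1 - k1 ^ 2) ^ 2 *
        (k1 * k2 + k2 ^ 2)) := by positivity
    nlinarith [hmul, hr, mul_pos ha1' ha1']
  have hvert : GB + 2 * GA * θ₂ ≤ 0 := by
    have h1 : (GB + 2 * GA * θ₂) * (1 - k1 ^ 2) = GB * (1 - k1 ^ 2) - 2 * GA * s := by
      linear_combination (2 * GA) * hθ₂val
    have h2 : GB * (1 - k1 ^ 2) - 2 * GA * s ≤ 0 := by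
      rw [hGA, hGB]
      nlinarith [mul_pos hk1 hk2, mul_pos (mul_pos hk1 hk2) (mul_pos hs0 hs0)]
    nlinarith
  have hG : 0 ≤ GA * θ ^ 2 + GB * θ + GC := by
    have h1 : 0 ≤ (θ₂ - θ) * (-(GB + 2 * GA * θ₂)) :=
      mul_nonneg (by linarith) (by linarith)
    have h2 : 0 ≤ GA * (θ - θ₂) ^ 2 := mul_nonneg hGA0 (sq_nonneg _)
    nlinarith
  -- A1 ≤ A2
  have hE : 0 ≤ n1 * d2 - d1 * n2 := by
    have hid : n1 * d2 - d1 * n2 =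
        k1 ^ 2 * k2 ^ 2 * (k1 * k2) * (k2 - k1) * (GA * θ ^ 2 + GB * θ + GC) := by
      rw [hn1def, hd1def, hn2def, hd2def, hGA, hGB, hGC]
      ring
    rw [hid]
    have : 0 ≤ k1 ^ 2 * k2 ^ 2 * (k1 * k2) * (k2 - k1) :=
      mul_nonneg (by positivity) (by linarith)
    exact mul_nonneg this hG
  have hA12 : n1 / d1 ≤ n2 / d2 := by
    have hkey : n1 / d1 - n2 / d2 = (n1 * d2 - d1 * n2) / (d1 * d2) :=
      div_sub_div _ _ hd1.ne' hd2.ne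
    have hdd : d1 * d2 < 0 := mul_neg_of_pos_of_neg hd1 hd2
    have : (n1 * d2 - d1 * n2) / (d1 * d2) ≤ 0 :=
      div_nonpos_of_nonneg_of_nonpos hE hdd.le
    linarith [hkey ▸ this]
  -- assemble
  have hT2 : 0 ≤ Real.arctan (n2 / d2) := by
    rw [← Real.arctan_zero]
    exact Real.arctan_strictMono.monotone hA2
  have hT12 : Real.arctan (n1 / d1) ≤ Real.arctan (n2 / d2) :=
    Real.arctan_strictMono.monotone hA12
  have hπ : (0 : ℝ) < Real.pi := Real.pi_pos
  have hcoef : 1 / Real.pi ≤ k2 / (k1 * Real.pi) := by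
    rw [div_le_div_iff₀ hπ (by positivity)]
    nlinarith
  have h1 : 1 / Real.pi * Real.arctan (n1 / d1) ≤ 1 / Real.pi * Real.arctan (n2 / d2) :=
    mul_le_mul_of_nonneg_left hT12 (by positivity)
  have h2 : 1 / Real.pi * Real.arctan (n2 / d2) ≤ k2 / (k1 * Real.pi) * Real.arctan (n2 / d2) :=
    mul_le_mul_of_nonneg_right hcoef hT2
  show (1 / 2) * (1 + k2 / k1) + 1 / Real.pi * Real.arctan (n1 / d1)
      - k2 / (k1 * Real.pi) * Real.arctan (n2 / d2) ≤ (1 + k2 / k1) / 2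
  linarith

end aux

lemma basic_facts (c p : ℝ) (hc : c ∈ Set.Ioo 0 (Real.sqrt 2)) (hp : p ∈ Set.Ioo 0 1)
    (hpp : p < p0 c) :
    0 < kappa1 c p ∧ kappa1 c p < kappa2 c p ∧ (kappa1 c p) ^ 2 < 1 ∧ 1 < (kappa2 c p) ^ 2 ∧
    (kappa1 c p) ^ 2 * (kappa2 c p) ^ 2 < 1 ∧
    xiPar c p = (kappa1 c p) ^ 2 * (kappa2 c p) ^ 2 ∧
    c ^ 2 = (kappa1 c p) ^ 2 + (kappa2 c p) ^ 2 ∧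
    0 < Real.sqrt (2 - c ^ 2) ∧
    theta2 c p = -Real.sqrt (2 - c ^ 2) / (1 - (kappa1 c p) ^ 2) := by
  obtain ⟨hc0, hcs⟩ := hc
  obtain ⟨hp0, hp1⟩ := hp
  have h2 : (Real.sqrt 2) ^ 2 = 2 := Real.sq_sqrt (by norm_num)
  have hc2 : c ^ 2 < 2 := by nlinarith [Real.sqrt_nonneg 2]
  have hc4 : 0 < c ^ 4 := by positivity
  have hc1 : 1 < c ^ 2 := by
    have hd : 0 < 4 * (c ^ 2 - 1) / c ^ 4 := lt_trans hp0 (by rwa [p0] at hpp)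
    rcases div_pos_iff.mp hd with ⟨h, _⟩ | ⟨_, h⟩
    · linarith
    · linarith
  have hpc : p * c ^ 4 < 4 * (c ^ 2 - 1) := by
    rw [p0, lt_div_iff₀ hc4] at hpp
    linarith
  set u : ℝ := Real.sqrt (1 - p) with hu
  have hu0 : 0 < u := Real.sqrt_pos.mpr (by linarith)
  have hu2 : u ^ 2 = 1 - p := Real.sq_sqrt (by linarith)
  have hu1 : u < 1 := by nlinarith [hu2, hu0, hp0]
  have hrad : Real.sqrt (c ^ 4 - 4 * xiPar c p) = c ^ 2 * u := by
    rw [show c ^ 4 - 4 * xiPar c p = (c ^ 2) ^ 2 * (1 - p) by rw [xiPar]; ring,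
      Real.sqrt_mul (sq_nonneg _), Real.sqrt_sq (sq_nonneg c), hu]
  have ha : (kappa1 c p) ^ 2 = (c ^ 2 - c ^ 2 * u) / 2 := by
    rw [kappa1, hrad, Real.sq_sqrt (by nlinarith)]
  have hb : (kappa2 c p) ^ 2 = (c ^ 2 + c ^ 2 * u) / 2 := by
    rw [kappa2, hrad, Real.sq_sqrt (by nlinarith)]
  have hkey : 2 - c ^ 2 < c ^ 2 * u := by
    by_contra h
    push_neg at h
    have h1 : (c ^ 2 * u) ^ 2 ≤ (2 - c ^ 2) ^ 2 := by
      have := mul_self_le_mul_self (by positivity : (0:ℝ) ≤ c ^ 2 * u) h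
      nlinarith
    nlinarith [hu2]
  have hb1 : 1 < (kappa2 c p) ^ 2 := by rw [hb]; nlinarith
  have ha1 : (kappa1 c p) ^ 2 < 1 := by rw [ha]; nlinarith
  have ha0 : 0 < (kappa1 c p) ^ 2 := by rw [ha]; nlinarith
  have hk1 : 0 < kappa1 c p := by
    rw [kappa1]
    apply Real.sqrt_pos.mpr
    rw [hrad]
    nlinarith
  have hk2 : 0 < kappa2 c p := by
    rw [kappa2]
    apply Real.sqrt_pos.mpr
    rw [hrad]
    nlinarith
  have hk12 : kappa1 c p < kappa2 c p := by nlinarith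
  have hprod : xiPar c p = (kappa1 c p) ^ 2 * (kappa2 c p) ^ 2 := by
    rw [ha, hb, xiPar]
    nlinarith [hu2]
  have hsum : c ^ 2 = (kappa1 c p) ^ 2 + (kappa2 c p) ^ 2 := by rw [ha, hb]; ring
  have hξ1 : (kappa1 c p) ^ 2 * (kappa2 c p) ^ 2 < 1 := by
    rw [← hprod, xiPar]
    nlinarith [mul_pos hc4 (show (0:ℝ) < 1 - p by linarith),
      mul_pos (show (0:ℝ) < 2 - c ^ 2 by linarith) (show (0:ℝ) < 2 - c ^ 2 by linarith)]
  have hs0 : 0 < Real.sqrt (2 - c ^ 2) := Real.sqrt_pos.mpr (by linarith)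
  have hθ2 : theta2 c p = -Real.sqrt (2 - c ^ 2) / (1 - (kappa1 c p) ^ 2) := by
    rw [theta2, ha, hu]
    have hden : (0 : ℝ) < 2 - c ^ 2 + c ^ 2 * Real.sqrt (1 - p) := by
      rw [← hu]; nlinarith
    have hden2 : (0 : ℝ) < 1 - (c ^ 2 - c ^ 2 * Real.sqrt (1 - p)) / 2 := by
      rw [← hu]; nlinarith
    have hDD : (2 - c ^ 2 + c ^ 2 * Real.sqrt (1 - p)) *
        (2 - c ^ 2 + c ^ 2 * Real.sqrt (1 - p))⁻¹ = 1 := mul_inv_cancel₀ hden.ne'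
    rw [div_eq_div_iff hden.ne' hden2.ne']
    ring
  exact ⟨hk1, hk12, ha1, hb1, hξ1, hprod, hsum, hs0, hθ2⟩

/-- Lemma 3.3, reduced form: For `c ∈ (0,√2)`, `p ∈ (0,1)` with
`p < p₀`, and `k ∈ ℕ`, `k ≥ 1`, with `κ₂/κ₁ < k`, the set of `θ < θ₂` with
`L(c,p,θ)` a positive integer is finite with at most `⌈(k+1)/2⌉ − 1` elements. -/
theorem stmt17 (c p : ℝ) (hc : c ∈ Set.Ioo 0 (Real.sqrt 2)) (hp : p ∈ Set.Ioo 0 1)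
    (hpp : p < p0 c) (k : ℕ) (hk : 1 ≤ k)
    (hκ : kappa2 c p / kappa1 c p < (k : ℝ)) :
    letI S : Set ℝ := {θ : ℝ | θ < theta2 c p ∧
      ∃ m : ℕ, 0 < m ∧ Lfun c p θ = (m : ℝ)}
    S.Finite ∧ (S.ncard : ℤ) ≤ ⌈((k : ℚ) + 1) / 2⌉ - 1 := by
  set S : Set ℝ := {θ : ℝ | θ < theta2 c p ∧ ∃ m : ℕ, 0 < m ∧ Lfun c p θ = (m : ℝ)}
    with hSdef
  obtain ⟨hk1, hk12, ha1, hb1, hξ1, hprod, hsum, hs0, hθ2⟩ := basic_facts c p hc hp hpp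
  set k1 := kappa1 c p
  set k2 := kappa2 c p
  set s := Real.sqrt (2 - c ^ 2) with hsdef
  have hc2 : c ^ 2 < 2 := by
    nlinarith [Real.sq_sqrt (show (0:ℝ) ≤ 2 by norm_num), hc.1, hc.2, Real.sqrt_nonneg 2]
  have hs2 : s ^ 2 = 2 - (k1 ^ 2 + k2 ^ 2) := by
    rw [hsdef, Real.sq_sqrt (by linarith), hsum]
  have hLf : Lfun c p = auxF k1 k2 s := by
    funext θ
    rw [Lfun, auxF, hprod, show (1 : ℝ) - c ^ 2 = 1 - (k1 ^ 2 + k2 ^ 2) by rw [hsum]]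
  have hanti : StrictAntiOn (auxF k1 k2 s) (Set.Iio (-s / (1 - k1 ^ 2))) :=
    auxF_anti hk1 hk12 ha1 hb1 hξ1 hs0 hs2
  have hSsub : S ⊆ Set.Iio (-s / (1 - k1 ^ 2)) := by
    intro θ hθ
    rw [hSdef, Set.mem_setOf_eq] at hθ
    exact Set.mem_Iio.mpr (hθ2 ▸ hθ.1)
  have hinj : Set.InjOn (Lfun c p) S := by
    rw [hLf]
    exact (hanti.injOn).mono hSsub
  set t : ℕ := k / 2 with htdef
  have himg : Lfun c p '' S ⊆ (fun m : ℕ => (m : ℝ)) '' (Set.Icc 1 t) := by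
    rintro x ⟨θ, hθS, rfl⟩
    rw [hSdef, Set.mem_setOf_eq] at hθS
    obtain ⟨hθlt, m, hm0, hLθ⟩ := hθS
    refine ⟨m, ⟨hm0, ?_⟩, hLθ.symm⟩
    have hbound : Lfun c p θ ≤ (1 + k2 / k1) / 2 := by
      rw [hLf]
      exact auxF_le hk1 hk12 ha1 hb1 hξ1 hs0 hs2 (hθ2 ▸ hθlt)
    have hmr : (m : ℝ) < ((k : ℝ) + 1) / 2 := by
      rw [← hLθ]
      calc Lfun c p θ ≤ (1 + k2 / k1) / 2 := hbound
        _ < ((k : ℝ) + 1) / 2 := by linarith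
    have hmk : 2 * m < k + 1 := by exact_mod_cast (by push_cast; linarith :
      ((2 * m : ℕ) : ℝ) < ((k + 1 : ℕ) : ℝ))
    have hmk2 : m * 2 ≤ k := by omega
    exact (Nat.le_div_iff_mul_le (by norm_num)).mpr hmk2
  have hfinimg : ((fun m : ℕ => (m : ℝ)) '' (Set.Icc 1 t)).Finite :=
    (Set.finite_Icc 1 t).image _
  have hfin : S.Finite := Set.Finite.of_finite_image (hfinimg.subset himg) hinj
  refine ⟨hfin, ?_⟩
  have hcard : S.ncard ≤ t := by
    calc S.ncard = (Lfun c p '' S).ncard := (Set.ncard_image_of_injOn hinj).symm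
      _ ≤ ((fun m : ℕ => (m : ℝ)) '' (Set.Icc 1 t)).ncard := Set.ncard_le_ncard himg hfinimg
      _ = (Set.Icc 1 t).ncard := Set.ncard_image_of_injective _ Nat.cast_injective
      _ = t := by
          rw [show (Set.Icc 1 t : Set ℕ) = ↑(Finset.Icc 1 t) by simp, Set.ncard_coe_finset,
            Nat.card_Icc]
          omega
  have hceil : (t : ℤ) < ⌈((k : ℚ) + 1) / 2⌉ := by
    rw [Int.lt_ceil]
    have h1 : t * 2 ≤ k := Nat.div_mul_le_self k 2
    push_cast
    have : ((t : ℚ)) * 2 ≤ (k : ℚ) := by exact_mod_cast h1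
    linarith
  have : (S.ncard : ℤ) ≤ (t : ℤ) := by exact_mod_cast hcard
  omega
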